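/- arXiv:2111.15653 — 6 statements merged into one kernel-verified Lean document; each statement's English description precedes it below -/
import Mathlib

section
/- Let R be a polynomial ring over a field of characteristic 0 and I an ideal of R. Then for all positive integers n, m, the m-th differential power of the n-th differential power of I equals the (n+m−1)-th differential power of I: (I^⟨n⟩)^⟨m⟩ = I^⟨n+m−1⟩. -/
/-- `IsDiffOp A n φ` says that the `A`-linear endomorphism `φ` of `R` is an
`A`-linear differential operator of order at most `n`. -/
def IsDiffOp (A : Type*) {R : Type*} [CommRing A] [CommRing R] [Algebra A R] :
    ℕ → (R →ₗ[A] R) → Prop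
  | 0 => fun φ => ∃ r : R, φ = LinearMap.mulLeft A r
  | n + 1 => fun φ => ∀ a : R,
      IsDiffOp A n (φ ∘ₗ LinearMap.mulLeft A a - LinearMap.mulLeft A a ∘ₗ φ)

theorem isDiffOp_comp_mulLeft (A : Type*) {R : Type*} [CommRing A] [CommRing R]
    [Algebra A R] (x : R) (n : ℕ) :
    ∀ φ : R →ₗ[A] R, IsDiffOp A n φ → IsDiffOp A n (φ ∘ₗ LinearMap.mulLeft A x) := by
  induction n with
  | zero =>
    rintro φ ⟨r, rfl⟩
    exact ⟨r * x, by ext y; simp [mul_assoc]⟩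
  | succ n ih =>
    intro φ h a
    have h2 := ih _ (h a)
    have key : (φ ∘ₗ LinearMap.mulLeft A x) ∘ₗ LinearMap.mulLeft A a -
        LinearMap.mulLeft A a ∘ₗ (φ ∘ₗ LinearMap.mulLeft A x) =
        (φ ∘ₗ LinearMap.mulLeft A a - LinearMap.mulLeft A a ∘ₗ φ) ∘ₗ LinearMap.mulLeft A x := by
      ext y
      simp [mul_left_comm]
    rw [key]
    exact h2

section General
variable {A R : Type*} [CommRing A] [CommRing R] [Algebra A R]

theorem isDiffOp_zero (n : ℕ) : IsDiffOp A n (0 : R →ₗ[A] R) := by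
  induction n with
  | zero => exact ⟨0, by ext y; simp⟩
  | succ n ih => intro a; simpa using ih

theorem isDiffOp_succ {n : ℕ} {φ : R →ₗ[A] R} (h : IsDiffOp A n φ) :
    IsDiffOp A (n + 1) φ := by
  induction n generalizing φ with
  | zero =>
    obtain ⟨r, rfl⟩ := h
    intro a
    have : (LinearMap.mulLeft A r ∘ₗ LinearMap.mulLeft A a
        - LinearMap.mulLeft A a ∘ₗ LinearMap.mulLeft A r) = 0 := by
      ext y; simp [mul_left_comm, mul_assoc, mul_comm]
    rw [this]; exact isDiffOp_zero 0
  | succ n ih => exact fun a => ih (h a)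

theorem isDiffOp_of_le {n n' : ℕ} (h : n ≤ n') {φ : R →ₗ[A] R} (hφ : IsDiffOp A n φ) :
    IsDiffOp A n' φ := by
  induction h with
  | refl => exact hφ
  | step _ ih => exact isDiffOp_succ ih

theorem isDiffOp_add {n : ℕ} {φ ψ : R →ₗ[A] R} (hφ : IsDiffOp A n φ) (hψ : IsDiffOp A n ψ) :
    IsDiffOp A n (φ + ψ) := by
  induction n generalizing φ ψ with
  | zero =>
    obtain ⟨r, rfl⟩ := hφ; obtain ⟨s, rfl⟩ := hψ
    exact ⟨r + s, by ext y; simp [add_mul]⟩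
  | succ n ih =>
    intro a
    have key : ((φ + ψ) ∘ₗ LinearMap.mulLeft A a - LinearMap.mulLeft A a ∘ₗ (φ + ψ)) =
        (φ ∘ₗ LinearMap.mulLeft A a - LinearMap.mulLeft A a ∘ₗ φ) +
        (ψ ∘ₗ LinearMap.mulLeft A a - LinearMap.mulLeft A a ∘ₗ ψ) := by
      ext y; simp; ring
    rw [key]; exact ih (hφ a) (hψ a)

theorem isDiffOp_smul {n : ℕ} (c : A) {φ : R →ₗ[A] R} (hφ : IsDiffOp A n φ) :
    IsDiffOp A n (c • φ) := by
  induction n generalizing φ with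
  | zero =>
    obtain ⟨r, rfl⟩ := hφ
    exact ⟨c • r, by ext y; simp [smul_mul_assoc]⟩
  | succ n ih =>
    intro a
    have key : ((c • φ) ∘ₗ LinearMap.mulLeft A a - LinearMap.mulLeft A a ∘ₗ (c • φ)) =
        c • (φ ∘ₗ LinearMap.mulLeft A a - LinearMap.mulLeft A a ∘ₗ φ) := by
      ext y; simp [smul_sub]
    rw [key]; exact ih (hφ a)

theorem isDiffOp_neg {n : ℕ} {φ : R →ₗ[A] R} (hφ : IsDiffOp A n φ) :
    IsDiffOp A n (-φ) := by
  have := isDiffOp_smul (-1 : A) hφ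
  convert this using 1
  exact (neg_one_smul A φ).symm

theorem isDiffOp_sub {n : ℕ} {φ ψ : R →ₗ[A] R} (hφ : IsDiffOp A n φ) (hψ : IsDiffOp A n ψ) :
    IsDiffOp A n (φ - ψ) := by
  have := isDiffOp_add hφ (isDiffOp_neg hψ)
  simpa [sub_eq_add_neg] using this

theorem isDiffOp_sum {n : ℕ} {ι : Type*} (s : Finset ι) (f : ι → (R →ₗ[A] R))
    (hf : ∀ i ∈ s, IsDiffOp A n (f i)) : IsDiffOp A n (∑ i ∈ s, f i) := by
  classical
  induction s using Finset.induction_on with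
  | empty => simpa using isDiffOp_zero n
  | insert _ _ hx ih =>
    rw [Finset.sum_insert hx]
    exact isDiffOp_add (hf _ (Finset.mem_insert_self _ _))
      (ih fun i hi => hf i (Finset.mem_insert_of_mem hi))

theorem isDiffOp_comp : ∀ (N p q : ℕ) (φ ψ : R →ₗ[A] R), p + q ≤ N →
    IsDiffOp A p φ → IsDiffOp A q ψ → IsDiffOp A (p + q) (φ ∘ₗ ψ) := by
  intro N
  induction N with
  | zero =>
    intro p q φ ψ hN hφ hψ
    obtain ⟨rfl, rfl⟩ : p = 0 ∧ q = 0 := by omega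
    obtain ⟨r, rfl⟩ := hφ; obtain ⟨s, rfl⟩ := hψ
    exact ⟨r * s, by ext y; simp [mul_assoc]⟩
  | succ N ih =>
    intro p q φ ψ hN hφ hψ
    match q with
    | 0 =>
      obtain ⟨s, rfl⟩ := hψ
      exact isDiffOp_comp_mulLeft A s p φ hφ
    | q' + 1 =>
      intro a
      have key : ((φ ∘ₗ ψ) ∘ₗ LinearMap.mulLeft A a - LinearMap.mulLeft A a ∘ₗ (φ ∘ₗ ψ)) =
          φ ∘ₗ (ψ ∘ₗ LinearMap.mulLeft A a - LinearMap.mulLeft A a ∘ₗ ψ) +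
          (φ ∘ₗ LinearMap.mulLeft A a - LinearMap.mulLeft A a ∘ₗ φ) ∘ₗ ψ := by
        ext y; simp
      rw [key]
      have h1 : IsDiffOp A (p + q') (φ ∘ₗ (ψ ∘ₗ LinearMap.mulLeft A a - LinearMap.mulLeft A a ∘ₗ ψ)) :=
        ih p q' _ _ (by omega) hφ (hψ a)
      have h2 : IsDiffOp A (p + q') ((φ ∘ₗ LinearMap.mulLeft A a - LinearMap.mulLeft A a ∘ₗ φ) ∘ₗ ψ) := by
        match p with
        | 0 =>
          obtain ⟨r, rfl⟩ := hφ
          have : (LinearMap.mulLeft A r ∘ₗ LinearMap.mulLeft A a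
              - LinearMap.mulLeft A a ∘ₗ LinearMap.mulLeft A r) = 0 := by
            ext y; simp [mul_left_comm, mul_assoc, mul_comm]
          rw [this]
          simpa using isDiffOp_zero (0 + q')
        | p' + 1 =>
          have := ih p' (q' + 1) _ ψ (by omega) (hφ a) hψ
          exact isDiffOp_of_le (by omega) this
      have : p + (q' + 1) = (p + q') + 1 := by omega
      rw [this] at *
      exact isDiffOp_add h1 h2

theorem isDiffOp_mulLeft (r : R) (n : ℕ) : IsDiffOp A n (LinearMap.mulLeft A r) :=
  isDiffOp_of_le (Nat.zero_le n) ⟨r, rfl⟩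

theorem isDiffOp_comp' {p q : ℕ} {φ ψ : R →ₗ[A] R} (hφ : IsDiffOp A p φ)
    (hψ : IsDiffOp A q ψ) : IsDiffOp A (p + q) (φ ∘ₗ ψ) :=
  isDiffOp_comp (p + q) p q φ ψ le_rfl hφ hψ

end General

/-- The `n`-th differential power of an ideal `I` of the `A`-algebra `R`:
the set of `r ∈ R` such that `∂ r ∈ I` for every `A`-linear differential
operator `∂` of order at most `n - 1`. -/
def diffPow (A : Type*) {R : Type*} [CommRing A] [CommRing R] [Algebra A R]
    (n : ℕ) (I : Ideal R) : Ideal R where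
  carrier := {r | ∀ φ : R →ₗ[A] R, IsDiffOp A (n - 1) φ → φ r ∈ I}
  add_mem' := fun hx hy φ hφ => by simp [map_add]; exact I.add_mem (hx φ hφ) (hy φ hφ)
  zero_mem' := fun φ _ => by simpa using I.zero_mem
  smul_mem' := fun c x hx => by
    intro φ hφ
    have := hx (φ ∘ₗ LinearMap.mulLeft A c) (isDiffOp_comp_mulLeft A c _ φ hφ)
    simpa [smul_eq_mul] using this


section Poly
open MvPolynomial

variable {k : Type*} [Field k] {d : ℕ}

local notation "R" => MvPolynomial (Fin d) k

/-- Total degree of a multi-index. -/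
def degF (β : Fin d →₀ ℕ) : ℕ := ∑ j : Fin d, β j

theorem degF_add (β γ : Fin d →₀ ℕ) : degF (β + γ) = degF β + degF γ := by
  simp [degF, Finset.sum_add_distrib]

@[simp] theorem degF_zero : degF (0 : Fin d →₀ ℕ) = 0 := by simp [degF]

theorem degF_single_one (i : Fin d) : degF (Finsupp.single i 1) = 1 := by
  simp [degF, Finsupp.single_apply]

theorem le_degF (β : Fin d →₀ ℕ) (j : Fin d) : β j ≤ degF β :=
  Finset.single_le_sum (fun _ _ => Nat.zero_le _) (Finset.mem_univ j)

theorem degF_eq_zero {β : Fin d →₀ ℕ} (h : degF β = 0) : β = 0 := by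
  ext j
  have := le_degF β j
  simp only [Finsupp.coe_zero, Pi.zero_apply]
  omega

theorem degF_le_of_le {β γ : Fin d →₀ ℕ} (h : β ≤ γ) : degF β ≤ degF γ := by
  rw [Finsupp.le_def] at h
  exact Finset.sum_le_sum fun j _ => h j

theorem degF_lt_of_lt {β γ : Fin d →₀ ℕ} (h : β < γ) : degF β < degF γ := by
  obtain ⟨hle, hne⟩ := lt_iff_le_and_ne.mp h
  rcases lt_or_eq_of_le (degF_le_of_le hle) with h' | h'
  · exact h'
  · exfalso
    apply hne
    ext j
    rw [Finsupp.le_def] at hle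
    by_contra hj
    have hjlt : β j < γ j := lt_of_le_of_ne (hle j) hj
    have : degF β < degF γ := by
      apply Finset.sum_lt_sum (fun i _ => hle i) ⟨j, Finset.mem_univ j, hjlt⟩
    omega

/-- Decompose a nonzero multi-index as `single i 1 + β'`. -/
theorem exists_single_add {β : Fin d →₀ ℕ} (h : β ≠ 0) :
    ∃ (i : Fin d) (β' : Fin d →₀ ℕ), β = Finsupp.single i 1 + β' ∧ degF β' + 1 = degF β := by
  obtain ⟨i, hi⟩ : ∃ i, β i ≠ 0 := by
    by_contra hc
    push_neg at hc
    exact h (Finsupp.ext fun j => hc j)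
  refine ⟨i, β - Finsupp.single i 1, ?_, ?_⟩
  · ext j
    simp only [Finsupp.coe_add, Finsupp.coe_tsub, Pi.add_apply, Pi.sub_apply,
      Finsupp.single_apply]
    rcases eq_or_ne i j with rfl | hj
    · simp only [if_true]
      omega
    · simp [hj]
  · have hle : Finsupp.single i 1 ≤ β := by
      rw [Finsupp.le_def]
      intro j
      rcases eq_or_ne i j with rfl | hj
      · simpa using Nat.one_le_iff_ne_zero.mpr hi
      · simp [Finsupp.single_apply, hj]
    have h1 : Finsupp.single i 1 + (β - Finsupp.single i 1) = β := by
      rw [add_comm]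
      exact tsub_add_cancel_of_le hle
    have := degF_add (Finsupp.single i 1) (β - Finsupp.single i 1)
    rw [h1, degF_single_one] at this
    omega

/-- The partial derivative as a `k`-linear endomorphism. -/
noncomputable def pd (i : Fin d) : R →ₗ[k] R := (pderiv i).toLinearMap

theorem pd_apply (i : Fin d) (f : R) : pd i f = pderiv i f := rfl

theorem pd_comp_pd (i j : Fin d) : (pd (k := k) i) ∘ₗ pd j = pd j ∘ₗ pd i := by
  apply MvPolynomial.linearMap_ext
  intro s
  apply LinearMap.ext
  intro c
  simp only [LinearMap.coe_comp, Function.comp_apply, pd_apply, pderiv_monomial]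
  rcases eq_or_ne i j with rfl | hij
  · rfl
  · have h1 : ((s - Finsupp.single j 1 : Fin d →₀ ℕ)) i = s i := by
      simp [Finsupp.tsub_apply, Finsupp.single_apply, Ne.symm hij]
    have h2 : ((s - Finsupp.single i 1 : Fin d →₀ ℕ)) j = s j := by
      simp [Finsupp.tsub_apply, Finsupp.single_apply, hij]
    rw [h1, h2, tsub_tsub, tsub_tsub, add_comm (Finsupp.single j 1)]
    congr 1
    ring

theorem pd_commute (i j : Fin d) : Commute (pd (k := k) i) (pd j) := by
  show _ = _
  rw [Module.End.mul_eq_comp, Module.End.mul_eq_comp]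
  exact pd_comp_pd i j

theorem isDiffOp_pd (i : Fin d) : IsDiffOp k 1 (pd (k := k) i) := by
  intro a
  refine ⟨pderiv i a, ?_⟩
  ext f
  simp only [LinearMap.sub_apply, LinearMap.coe_comp, Function.comp_apply,
    LinearMap.mulLeft_apply, pd_apply, LinearMap.coe_mk]
  rw [pderiv_mul]
  ring

end Poly

section Dop
open MvPolynomial

variable {k : Type*} [Field k] {d : ℕ}

local notation "R" => MvPolynomial (Fin d) k

theorem pd_multiset_comm (s : Multiset (R →ₗ[k] R))
    (hs : ∀ x ∈ s, ∃ i, x = pd (k := k) i) :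
    {x | x ∈ s}.Pairwise Commute := by
  intro x hx y hy _
  obtain ⟨i, rfl⟩ := hs x hx
  obtain ⟨j, rfl⟩ := hs y hy
  exact pd_commute i j

/-- Iterated partial derivative `∂^β`. -/
noncomputable def Dop (β : Fin d →₀ ℕ) : R →ₗ[k] R :=
  (β.toMultiset.map (pd (k := k))).noncommProd
    (pd_multiset_comm _ (by
      intro x hx
      obtain ⟨i, _, rfl⟩ := Multiset.mem_map.mp hx
      exact ⟨i, rfl⟩))

@[simp] theorem Dop_zero : Dop (k := k) (d := d) 0 = LinearMap.id := by
  simp [Dop, Finsupp.toMultiset_zero]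
  rfl

theorem Dop_add (β γ : Fin d →₀ ℕ) :
    Dop (k := k) (β + γ) = Dop β ∘ₗ Dop γ := by
  rw [← Module.End.mul_eq_comp]
  simp only [Dop, Finsupp.toMultiset_add, Multiset.map_add]
  exact Multiset.noncommProd_add _ _ _

theorem Dop_single_one (i : Fin d) : Dop (k := k) (Finsupp.single i 1) = pd i := by
  have h1 : Finsupp.toMultiset (Finsupp.single i 1) = {i} := by
    simp [Finsupp.toMultiset_single]
  rw [Dop]
  simp only [h1, Multiset.map_singleton]
  exact (Multiset.noncommProd_coe [pd (k := k) i] _).trans (by simp)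

theorem isDiffOp_Dop : ∀ (N : ℕ) (β : Fin d →₀ ℕ), degF β ≤ N →
    IsDiffOp k (degF β) (Dop (k := k) β) := by
  intro N
  induction N with
  | zero =>
    intro β hβ
    have : β = 0 := degF_eq_zero (Nat.le_zero.mp hβ)
    subst this
    rw [Dop_zero, degF_zero]
    exact ⟨1, by ext y; simp⟩
  | succ N ih =>
    intro β hβ
    rcases eq_or_ne β 0 with rfl | hne
    · rw [Dop_zero, degF_zero]
      exact ⟨1, by ext y; simp⟩
    · obtain ⟨i, β', rfl, hdeg⟩ := exists_single_add hne
      rw [Dop_add, Dop_single_one]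
      have h1 := isDiffOp_pd (k := k) i
      have h2 := ih β' (by omega)
      have := isDiffOp_comp' h1 h2
      exact isDiffOp_of_le (by omega) this

/-- The coefficient appearing when `∂^β` is applied to the monomial `x^γ`. -/
def dcoeff (β γ : Fin d →₀ ℕ) : ℕ := ∏ j : Fin d, (γ j).descFactorial (β j)

theorem Dop_monomial : ∀ (N : ℕ) (β : Fin d →₀ ℕ), degF β ≤ N → ∀ (γ : Fin d →₀ ℕ) (c : k),
    Dop β (monomial γ c) = monomial (γ - β) (c * (dcoeff β γ : k)) := by
  intro N
  induction N with
  | zero =>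
    intro β hβ γ c
    have : β = 0 := degF_eq_zero (Nat.le_zero.mp hβ)
    subst this
    simp [dcoeff]
  | succ N ih =>
    intro β hβ γ c
    rcases eq_or_ne β 0 with rfl | hne
    · simp [dcoeff]
    · obtain ⟨i, β', rfl, hdeg⟩ := exists_single_add hne
      rw [Dop_add, Dop_single_one, LinearMap.comp_apply, ih β' (by omega) γ c, pd_apply,
        pderiv_monomial]
      have hexp : γ - β' - Finsupp.single i 1 = γ - (Finsupp.single i 1 + β') := by
        rw [tsub_tsub, add_comm]
      rw [hexp]
      congr 1
      have happ : ((γ - β' : Fin d →₀ ℕ)) i = γ i - β' i := Finsupp.tsub_apply γ β' i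
      rw [happ]
      have hco : dcoeff (Finsupp.single i 1 + β') γ = dcoeff β' γ * (γ i - β' i) := by
        unfold dcoeff
        rw [← Finset.mul_prod_erase Finset.univ _ (Finset.mem_univ i),
          ← Finset.mul_prod_erase Finset.univ
            (fun j => (γ j).descFactorial (β' j)) (Finset.mem_univ i)]
        have h1 : ((Finsupp.single i 1 + β' : Fin d →₀ ℕ)) i = β' i + 1 := by
          simp [Finsupp.single_apply]
          omega
        have h2 : ∀ j ∈ Finset.univ.erase i,
            (γ j).descFactorial (((Finsupp.single i 1 + β') : Fin d →₀ ℕ) j)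
              = (γ j).descFactorial (β' j) := by
          intro j hj
          have hij : j ≠ i := (Finset.mem_erase.mp hj).1
          congr 1
          simp [Finsupp.single_apply, Ne.symm hij]
        rw [Finset.prod_congr rfl h2, h1, Nat.descFactorial_succ]
        ring
      rw [hco]
      push_cast
      ring
end Dop

section Struct
open MvPolynomial

variable {k : Type*} [Field k] {d : ℕ}

local notation "R" => MvPolynomial (Fin d) k

theorem X_mul_monomial' (i : Fin d) (γ : Fin d →₀ ℕ) (c : k) :
    (X i : R) * monomial γ c = monomial (γ + Finsupp.single i 1) c := by
  rw [X, monomial_mul, one_mul, add_comm]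

/-- A differential operator of order at most `s` vanishing on all monomials of
degree at most `s` is zero. -/
theorem diffOp_eq_zero : ∀ (s : ℕ) (P : R →ₗ[k] R), IsDiffOp k s P →
    (∀ γ : Fin d →₀ ℕ, degF γ ≤ s → P (monomial γ 1) = 0) → P = 0 := by
  intro s
  induction s with
  | zero =>
    rintro P ⟨r, rfl⟩ hv
    have h0 : r = 0 := by
      have := hv 0 (by simp)
      simpa using this
    subst h0
    ext f
    simp
  | succ s ih =>
    intro P hP hv
    have hcomm : ∀ i : Fin d,
        P ∘ₗ LinearMap.mulLeft k (X i : R) - LinearMap.mulLeft k (X i : R) ∘ₗ P = 0 := by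
      intro i
      refine ih _ (hP (X i)) ?_
      intro γ hγ
      simp only [LinearMap.sub_apply, LinearMap.coe_comp, Function.comp_apply,
        LinearMap.mulLeft_apply]
      rw [X_mul_monomial', hv _ (by rw [degF_add, degF_single_one]; omega),
        hv γ (by omega), mul_zero, sub_zero]
    have hmul : ∀ (i : Fin d) (f : R), P ((X i : R) * f) = (X i : R) * P f := by
      intro i f
      have := LinearMap.ext_iff.mp (hcomm i) f
      simpa [sub_eq_zero] using this
    have hmono : ∀ (N : ℕ) (γ : Fin d →₀ ℕ), degF γ ≤ N → P (monomial γ 1) = 0 := by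
      intro N
      induction N with
      | zero =>
        intro γ hγ
        have : γ = 0 := degF_eq_zero (Nat.le_zero.mp hγ)
        subst this
        exact hv 0 (by simp)
      | succ N ihN =>
        intro γ hγ
        rcases eq_or_ne γ 0 with rfl | hne
        · exact hv 0 (by simp)
        · obtain ⟨i, γ', rfl, hdeg⟩ := exists_single_add hne
          have : monomial (Finsupp.single i 1 + γ') (1 : k) = (X i : R) * monomial γ' 1 := by
            rw [X_mul_monomial', add_comm]
          rw [this, hmul, ihN γ' (by omega), mul_zero]
    apply MvPolynomial.linearMap_ext
    intro γ
    apply LinearMap.ext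
    intro c
    have : monomial γ c = c • monomial γ (1 : k) := by
      rw [smul_monomial, smul_eq_mul, mul_one]
    simp only [LinearMap.coe_comp, Function.comp_apply, LinearMap.zero_comp,
      LinearMap.zero_apply]
    rw [this, map_smul, hmono (degF γ) γ le_rfl, smul_zero]

/-- Multinomial coefficient of a pair of multi-indices. -/
def Cb (γ β : Fin d →₀ ℕ) : ℕ := ∏ j : Fin d, (γ j).choose (β j)

/-- The coefficients of the normal form of a differential operator. -/
noncomputable def gfun (P : R →ₗ[k] R) (γ : Fin d →₀ ℕ) : R :=
  P (monomial γ 1) - ∑ β ∈ (Finset.Iio γ).attach,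
      (Cb γ β.1) • (monomial (γ - β.1) (1 : k) * gfun P β.1)
termination_by degF γ
decreasing_by exact degF_lt_of_lt (Finset.mem_Iio.mp β.2)

theorem gfun_spec (P : R →ₗ[k] R) (γ : Fin d →₀ ℕ) :
    ∑ β ∈ Finset.Iic γ, (Cb γ β) • (monomial (γ - β) (1 : k) * gfun P β)
      = P (monomial γ 1) := by
  rw [← Finset.Iio_insert, Finset.sum_insert (by simp)]
  have h1 : Cb γ γ = 1 := by simp [Cb]
  have h2 : γ - γ = 0 := by simp
  rw [h1, h2, one_smul, monomial_zero', C_1, one_mul]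
  conv_lhs => rw [gfun]
  rw [Finset.sum_attach (Finset.Iio γ)
    (fun β => (Cb γ β) • (monomial (γ - β) (1 : k) * gfun P β))]
  ring

end Struct

section Qop
open MvPolynomial

variable {k : Type*} [Field k] {d : ℕ}

local notation "R" => MvPolynomial (Fin d) k

/-- The finset of multi-indices of degree at most `s`. -/
noncomputable def Sset (d s : ℕ) : Finset (Fin d →₀ ℕ) :=
  (Finset.Iic (Finsupp.equivFunOnFinite.symm (fun _ => s))).filter (fun β => degF β ≤ s)

theorem mem_Sset {s : ℕ} {β : Fin d →₀ ℕ} : β ∈ Sset d s ↔ degF β ≤ s := by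
  constructor
  · intro h
    exact (Finset.mem_filter.mp h).2
  · intro h
    refine Finset.mem_filter.mpr ⟨Finset.mem_Iic.mpr ?_, h⟩
    rw [Finsupp.le_def]
    intro j
    have h1 := le_degF β j
    simp only [Finsupp.equivFunOnFinite_symm_apply_apply]
    omega

/-- The inverse factorial scalar. -/
noncomputable def facinv (β : Fin d →₀ ℕ) : k :=
  ((((∏ j : Fin d, (β j).factorial) : ℕ) : k))⁻¹

/-- Normal form of a differential operator of order at most `s`. -/
noncomputable def Qop (P : R →ₗ[k] R) (s : ℕ) : R →ₗ[k] R :=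
  ∑ β ∈ Sset d s, (LinearMap.mulLeft k (facinv (k := k) β • gfun P β)) ∘ₗ Dop β

theorem isDiffOp_Qop (P : R →ₗ[k] R) (s : ℕ) : IsDiffOp k s (Qop P s) := by
  apply isDiffOp_sum
  intro β hβ
  have h1 : IsDiffOp k (0 + degF β)
      ((LinearMap.mulLeft k (facinv (k := k) β • gfun P β)) ∘ₗ Dop β) :=
    isDiffOp_comp' ⟨_, rfl⟩ (isDiffOp_Dop (degF β) β le_rfl)
  exact isDiffOp_of_le (by have := mem_Sset.mp hβ; omega) h1

theorem Qop_monomial [CharZero k] (P : R →ₗ[k] R) {s : ℕ} {γ : Fin d →₀ ℕ}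
    (hγ : degF γ ≤ s) : Qop P s (monomial γ 1) = P (monomial γ 1) := by
  rw [← gfun_spec P γ, Qop, LinearMap.sum_apply]
  have hsub : Finset.Iic γ ⊆ Sset d s := by
    intro β hβ
    have hβγ : β ≤ γ := Finset.mem_Iic.mp hβ
    exact mem_Sset.mpr (le_trans (degF_le_of_le hβγ) hγ)
  have hzero : ∀ β ∈ Sset d s, β ∉ Finset.Iic γ →
      ((LinearMap.mulLeft k (facinv (k := k) β • gfun P β)) ∘ₗ Dop β) (monomial γ 1) = 0 := by
    intro β hβS hβn
    have hnle : ¬ β ≤ γ := fun h => hβn (Finset.mem_Iic.mpr h)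
    obtain ⟨j, hj⟩ : ∃ j, γ j < β j := by
      by_contra hc
      push_neg at hc
      exact hnle (Finsupp.le_def.mpr hc)
    have hdz : dcoeff β γ = 0 := by
      apply Finset.prod_eq_zero (Finset.mem_univ j)
      exact Nat.descFactorial_eq_zero_iff_lt.mpr hj
    simp only [LinearMap.coe_comp, Function.comp_apply, LinearMap.mulLeft_apply]
    rw [Dop_monomial (degF β) β le_rfl, hdz]
    simp
  rw [← Finset.sum_subset hsub hzero]
  · apply Finset.sum_congr rfl
    intro β hβ
    have hβγ : β ≤ γ := Finset.mem_Iic.mp hβ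
    simp only [LinearMap.coe_comp, Function.comp_apply, LinearMap.mulLeft_apply]
    rw [Dop_monomial (degF β) β le_rfl, one_mul]
    have hF : ((((∏ j : Fin d, (β j).factorial) : ℕ) : k)) ≠ 0 := by
      rw [Nat.cast_ne_zero]
      have := Finset.prod_pos fun j (_ : j ∈ Finset.univ) => Nat.factorial_pos (β j)
      omega
    have hdc : (dcoeff β γ : k) =
        (((∏ j : Fin d, (β j).factorial) : ℕ) : k) * ((Cb γ β : ℕ) : k) := by
      rw [← Nat.cast_mul]
      congr 1
      rw [dcoeff, Cb, ← Finset.prod_mul_distrib]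
      exact Finset.prod_congr rfl fun j _ => Nat.descFactorial_eq_factorial_mul_choose _ _
    have hmono : monomial (γ - β) ((dcoeff β γ : k)) =
        (dcoeff β γ : k) • monomial (γ - β) (1 : k) := by
      rw [smul_monomial, smul_eq_mul, mul_one]
    rw [hmono, smul_mul_smul_comm, hdc, facinv]
    rw [show ((((∏ j : Fin d, (β j).factorial) : ℕ) : k))⁻¹ *
        ((((∏ j : Fin d, (β j).factorial) : ℕ) : k) * ((Cb γ β : ℕ) : k))
        = ((Cb γ β : ℕ) : k) by
      rw [← mul_assoc, inv_mul_cancel₀ hF, one_mul]]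
    rw [Nat.cast_smul_eq_nsmul, mul_comm (gfun P β)]

/-- Structure theorem: every differential operator of order at most `s`
equals its normal form. -/
theorem eq_Qop [CharZero k] {s : ℕ} {P : R →ₗ[k] R} (h : IsDiffOp k s P) :
    P = Qop P s := by
  have := diffOp_eq_zero s (P - Qop P s) (isDiffOp_sub h (isDiffOp_Qop P s))
    (fun γ hγ => by simp [Qop_monomial P hγ])
  exact sub_eq_zero.mp this

end Qop

section Main
open MvPolynomial

variable {k : Type*} [Field k] {d : ℕ}

local notation "R" => MvPolynomial (Fin d) k

theorem exists_le_degF : ∀ (a : ℕ) (β : Fin d →₀ ℕ),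
    ∃ β1, β1 ≤ β ∧ degF β1 = min a (degF β) := by
  intro a
  induction a with
  | zero => exact fun β => ⟨0, zero_le, by simp⟩
  | succ a ih =>
    intro β
    obtain ⟨β1, hle, hdeg⟩ := ih β
    by_cases h : degF β ≤ a
    · exact ⟨β1, hle, by omega⟩
    · have hd1 : degF β1 = a := by omega
      obtain ⟨i, hi⟩ : ∃ i, β1 i < β i := by
        by_contra hc
        push_neg at hc
        have hba : β ≤ β1 := Finsupp.le_def.mpr hc
        have := degF_le_of_le hba
        omega
      refine ⟨β1 + Finsupp.single i 1, ?_, ?_⟩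
      · rw [Finsupp.le_def]
        intro j
        have := Finsupp.le_def.mp hle j
        simp only [Finsupp.coe_add, Pi.add_apply, Finsupp.single_apply]
        rcases eq_or_ne i j with rfl | hij
        · simp only [if_true]
          omega
        · simp [hij]
          exact Finsupp.le_def.mp hle j
      · rw [degF_add, degF_single_one]
        omega

theorem split_degF {a b : ℕ} {β : Fin d →₀ ℕ} (h : degF β ≤ a + b) :
    ∃ β1 β2, β = β1 + β2 ∧ degF β1 ≤ a ∧ degF β2 ≤ b := by
  obtain ⟨β1, hle, hdeg⟩ := exists_le_degF a β
  have hsum : β1 + (β - β1) = β := add_tsub_cancel_of_le hle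
  have hdadd : degF β1 + degF (β - β1) = degF β := by
    rw [← degF_add, hsum]
  exact ⟨β1, β - β1, hsum.symm, by omega, by omega⟩

theorem mem_diffPow {A R' : Type*} [CommRing A] [CommRing R'] [Algebra A R']
    {n : ℕ} {I : Ideal R'} {r : R'} :
    r ∈ diffPow A n I ↔ ∀ φ : R' →ₗ[A] R', IsDiffOp A (n - 1) φ → φ r ∈ I :=
  Iff.rfl

theorem diffPow_diffPow' {k : Type*} [Field k] [CharZero k] {d : ℕ}
    (I : Ideal (MvPolynomial (Fin d) k)) (n m : ℕ) (hn : 0 < n) (hm : 0 < m) :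
    diffPow k m (diffPow k n I) = diffPow k (n + m - 1) I := by
  ext r
  rw [mem_diffPow, mem_diffPow]
  constructor
  · intro hr φ hφ
    have hφ' : IsDiffOp k ((n - 1) + (m - 1)) φ := by
      have he : n + m - 1 - 1 = (n - 1) + (m - 1) := by omega
      rwa [he] at hφ
    rw [eq_Qop hφ', Qop, LinearMap.sum_apply]
    apply Ideal.sum_mem
    intro β hβ
    have hdeg : degF β ≤ (n - 1) + (m - 1) := mem_Sset.mp hβ
    obtain ⟨β1, β2, rfl, h1, h2⟩ := split_degF hdeg
    have hterm : ((LinearMap.mulLeft k (facinv (k := k) (β1 + β2) • gfun φ (β1 + β2)))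
        ∘ₗ Dop (β1 + β2)) r
        = ((LinearMap.mulLeft k (facinv (k := k) (β1 + β2) • gfun φ (β1 + β2)))
          ∘ₗ Dop β1) (Dop β2 r) := by
      rw [Dop_add]
      rfl
    rw [hterm]
    have h3 : Dop β2 r ∈ diffPow k n I :=
      hr (Dop β2) (isDiffOp_of_le (by omega) (isDiffOp_Dop (degF β2) β2 le_rfl))
    exact h3 _ (isDiffOp_of_le (show 0 + degF β1 ≤ n - 1 by omega)
      (isDiffOp_comp' (isDiffOp_mulLeft _ 0) (isDiffOp_Dop (degF β1) β1 le_rfl)))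
  · intro hr φ hφ ψ hψ
    have hc : IsDiffOp k ((n - 1) + (m - 1)) (ψ ∘ₗ φ) := isDiffOp_comp' hψ hφ
    have h2 : IsDiffOp k (n + m - 1 - 1) (ψ ∘ₗ φ) := isDiffOp_of_le (by omega) hc
    exact hr _ h2

end Main

/-- `(I^⟨n⟩)^⟨m⟩ = I^⟨n+m-1⟩` for ideals in a polynomial ring over a field of
characteristic zero. -/
theorem diffPow_diffPow {k : Type*} [Field k] [CharZero k] {d : ℕ}
    (I : Ideal (MvPolynomial (Fin d) k)) (n m : ℕ) (hn : 0 < n) (hm : 0 < m) :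
    diffPow k m (diffPow k n I) = diffPow k (n + m - 1) I :=
  diffPow_diffPow' I n m hn hm
end

section
/- Let I ⊆ k[x,y] be a non-principal monomial ideal with minimal monomial generators x^{β_{11}}y^{β_{12}},...,x^{β_{m1}}y^{β_{m2}} ordered so that β_{11} < ··· < β_{m1} and β_{12} > ··· > β_{m2}, and let i be an index maximizing β_{(i+1)1} + β_{i2} over 1 ≤ j < m. If a, b are nonnegative integers with a + b ≥ β_{(i+1)1} + β_{i2} − 1, a ≥ β_{11}, and b ≥ β_{m2}, then x^a y^b ∈ I. -/
/-- If `a + b ≥ β_{(i+1)1} + β_{i2} − 1`, `a ≥ β_{11}` and `b ≥ β_{m2}`,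
then `x^a y^b ∈ I`, for `I` a non-principal monomial ideal of `k[x,y]` with
generators ordered as in the paper and `i` an index maximizing `β_{(j+1)1} + β_{j2}`. -/
theorem monomial_mem_of_degree {k : Type*} [Field k] [CharZero k] {m : ℕ}
    (hm : 1 < m) (β1 β2 : Fin m → ℕ) (hβ1 : StrictMono β1) (hβ2 : StrictAnti β2)
    (i : Fin m) (hi : (i : ℕ) + 1 < m)
    (himax : ∀ j : Fin m, ∀ hj : (j : ℕ) + 1 < m,
      β1 ⟨(j : ℕ) + 1, hj⟩ + β2 j ≤ β1 ⟨(i : ℕ) + 1, hi⟩ + β2 i)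
    (a b : ℕ)
    (hab : β1 ⟨(i : ℕ) + 1, hi⟩ + β2 i ≤ a + b + 1)
    (ha : β1 ⟨0, by omega⟩ ≤ a) (hb : β2 ⟨m - 1, by omega⟩ ≤ b) :
    (MvPolynomial.X 0 : MvPolynomial (Fin 2) k) ^ a * MvPolynomial.X 1 ^ b ∈
      Ideal.span (Set.range fun j : Fin m =>
        (MvPolynomial.X 0 : MvPolynomial (Fin 2) k) ^ β1 j * MvPolynomial.X 1 ^ β2 j) := by
  -- Find j with β1 j ≤ a and β2 j ≤ b
  obtain ⟨j, hj1, hj2⟩ : ∃ j : Fin m, β1 j ≤ a ∧ β2 j ≤ b := by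
    set T : Finset (Fin m) := Finset.univ.filter (fun j => β1 j ≤ a) with hT
    have hne : T.Nonempty := ⟨⟨0, by omega⟩, by simp [hT, ha]⟩
    set j : Fin m := T.max' hne with hjdef
    have hjT : j ∈ T := T.max'_mem hne
    have hj1 : β1 j ≤ a := by simpa [hT] using hjT
    refine ⟨j, hj1, ?_⟩
    by_contra hj2
    push_neg at hj2
    have hjm : (j : ℕ) < m := j.isLt
    have hjlt : (j : ℕ) + 1 < m := by
      by_contra h
      have hje : j = ⟨m - 1, by omega⟩ := Fin.ext (show (j : ℕ) = m - 1 by omega)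
      rw [hje] at hj2; omega
    have hj'a : a < β1 ⟨(j : ℕ) + 1, hjlt⟩ := by
      by_contra h
      push_neg at h
      have hmem : (⟨(j : ℕ) + 1, hjlt⟩ : Fin m) ∈ T := by simp [hT, h]
      have hle := T.le_max' _ hmem
      rw [← hjdef] at hle
      have : (j : ℕ) + 1 ≤ (j : ℕ) := hle
      omega
    have := himax j hjlt
    omega
  obtain ⟨c, rfl⟩ : ∃ c, a = c + β1 j := ⟨a - β1 j, by omega⟩
  obtain ⟨d, rfl⟩ : ∃ d, b = d + β2 j := ⟨b - β2 j, by omega⟩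
  have hgen : (MvPolynomial.X 0 : MvPolynomial (Fin 2) k) ^ β1 j * MvPolynomial.X 1 ^ β2 j ∈
      Ideal.span (Set.range fun j : Fin m =>
        (MvPolynomial.X 0 : MvPolynomial (Fin 2) k) ^ β1 j * MvPolynomial.X 1 ^ β2 j) :=
    Ideal.subset_span ⟨j, rfl⟩
  have key : (MvPolynomial.X 0 : MvPolynomial (Fin 2) k) ^ (c + β1 j) *
        MvPolynomial.X 1 ^ (d + β2 j) =
      ((MvPolynomial.X 0 : MvPolynomial (Fin 2) k) ^ c * MvPolynomial.X 1 ^ d) *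
        ((MvPolynomial.X 0 : MvPolynomial (Fin 2) k) ^ β1 j * MvPolynomial.X 1 ^ β2 j) := by
    rw [pow_add, pow_add]; ring
  rw [key]
  exact Ideal.mul_mem_left _ _ hgen
end

section
/- Let R = k[x_1,...,x_d] with k of characteristic 0, α ∈ Z_{≥0}^d, and I = (x_i^{α_i} : i ∈ supp(α)). Fix a positive integer n and set c = min over ω ∈ Z_{≥0}^d with supp(ω) ⊆ supp(α) and |ω| = n of Σ_{i ∈ supp(ω)} (α_i − 1)(ω_i − 1). Then I^n ⊆ I^⟨n+c⟩. -/
section Aux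

open MvPolynomial Finset

variable {k : Type*} [CommRing k] {d : ℕ}

/-- The ideal spanned by divisor monomials of `x^γ` of total degree ≥ |γ| − m. -/
noncomputable def lowerSpan (γ : Fin d → ℕ) (m : ℕ) : Ideal (MvPolynomial (Fin d) k) :=
  Ideal.span { p | ∃ δ : Fin d → ℕ, (∀ i, δ i ≤ γ i) ∧ (∑ i, γ i) ≤ (∑ i, δ i) + m ∧
    p = ∏ i, X i ^ δ i }

lemma monomial_mem_lowerSpan (γ : Fin d → ℕ) (m : ℕ) (δ : Fin d → ℕ)
    (h1 : ∀ i, δ i ≤ γ i) (h2 : (∑ i, γ i) ≤ (∑ i, δ i) + m) :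
    (∏ i, X i ^ δ i : MvPolynomial (Fin d) k) ∈ lowerSpan γ m :=
  Ideal.subset_span ⟨δ, h1, h2, rfl⟩

lemma prod_pow_update_succ (δ : Fin d → ℕ) (i : Fin d) :
    (∏ j, X j ^ Function.update δ i (δ i + 1) j : MvPolynomial (Fin d) k)
      = X i * ∏ j, X j ^ δ j := by
  rw [← Finset.mul_prod_erase univ _ (mem_univ i), ← Finset.mul_prod_erase univ
    (fun j => X j ^ δ j) (mem_univ i), Function.update_self, pow_succ, mul_comm (X i ^ δ i) (X i),
    mul_assoc]
  congr 1
  · congr 1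
    exact Finset.prod_congr rfl fun j hj => by
      rw [Function.update_of_ne (Finset.ne_of_mem_erase hj)]

lemma prod_pow_update_pred (γ : Fin d → ℕ) (i : Fin d) (hi : γ i ≠ 0) :
    (∏ j, X j ^ γ j : MvPolynomial (Fin d) k)
      = X i * ∏ j, X j ^ Function.update γ i (γ i - 1) j := by
  have := prod_pow_update_succ (k := k) (Function.update γ i (γ i - 1)) i
  rw [Function.update_idem, Function.update_self] at this
  have h : γ i - 1 + 1 = γ i := Nat.succ_pred_eq_of_pos (Nat.pos_of_ne_zero hi)
  rw [h, Function.update_eq_self] at this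
  exact this

lemma sum_update_pred (γ : Fin d → ℕ) (i : Fin d) (hi : γ i ≠ 0) :
    (∑ j, Function.update γ i (γ i - 1) j) + 1 = ∑ j, γ j := by
  rw [Finset.sum_update_of_mem (mem_univ i)]
  have := Finset.add_sum_erase univ γ (mem_univ i)
  rw [Finset.sdiff_singleton_eq_erase]
  omega

lemma sum_update_succ (δ : Fin d → ℕ) (i : Fin d) :
    (∑ j, Function.update δ i (δ i + 1) j) = (∑ j, δ j) + 1 := by
  rw [Finset.sum_update_of_mem (mem_univ i), Finset.sdiff_singleton_eq_erase]
  have := Finset.add_sum_erase univ δ (mem_univ i)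
  omega

lemma lowerSpan_mono_pred (γ : Fin d → ℕ) (i : Fin d) (hi : γ i ≠ 0) (m : ℕ) :
    lowerSpan (k := k) (Function.update γ i (γ i - 1)) m ≤ lowerSpan γ (m + 1) := by
  apply Ideal.span_mono
  rintro p ⟨δ, h1, h2, rfl⟩
  refine ⟨δ, fun j => ?_, ?_, rfl⟩
  · have := h1 j
    rcases eq_or_ne j i with rfl | hj
    · rw [Function.update_self] at this; omega
    · rwa [Function.update_of_ne hj] at this
  · have := sum_update_pred γ i hi
    omega

lemma mul_X_mem_lowerSpan (γ : Fin d → ℕ) (i : Fin d) (hi : γ i ≠ 0) (m : ℕ)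
    (p : MvPolynomial (Fin d) k)
    (hp : p ∈ lowerSpan (Function.update γ i (γ i - 1)) m) :
    X i * p ∈ lowerSpan γ m := by
  induction hp using Submodule.span_induction with
  | mem q hq =>
    obtain ⟨δ, h1, h2, rfl⟩ := hq
    rw [← prod_pow_update_succ]
    apply monomial_mem_lowerSpan
    · intro j
      have h := h1 j
      by_cases hj : j = i
      · subst hj
        simp only [Function.update_self] at h ⊢
        omega
      · simp only [Function.update_of_ne hj] at h ⊢
        exact h
    · rw [sum_update_succ]
      have := sum_update_pred γ i hi
      omega
  | zero => simp
  | add q r _ _ hq hr => rw [mul_add]; exact add_mem hq hr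
  | smul r q _ hq => rw [smul_eq_mul, mul_left_comm]; exact Ideal.mul_mem_left _ r hq

lemma diffOp_prod_pow_mem (m : ℕ) :
    ∀ φ : MvPolynomial (Fin d) k →ₗ[k] MvPolynomial (Fin d) k, IsDiffOp k m φ →
    ∀ γ : Fin d → ℕ, φ (∏ i, X i ^ γ i) ∈ lowerSpan γ m := by
  induction m with
  | zero =>
    rintro φ ⟨r, rfl⟩ γ
    rw [LinearMap.mulLeft_apply]
    exact Ideal.mul_mem_left _ r (monomial_mem_lowerSpan γ 0 γ (fun _ => le_rfl) (by omega))
  | succ m ih =>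
    intro φ hφ γ
    suffices h : ∀ N : ℕ, ∀ γ : Fin d → ℕ, (∑ i, γ i) = N →
        φ (∏ i, X i ^ γ i) ∈ lowerSpan γ (m + 1) from h _ γ rfl
    intro N
    induction N with
    | zero =>
      intro γ hN
      have h1 : (1 : MvPolynomial (Fin d) k) ∈ lowerSpan (k := k) γ (m + 1) := by
        have := monomial_mem_lowerSpan (k := k) γ (m + 1) (fun _ => 0)
          (fun i => Nat.zero_le _) (by simp; omega)
        simpa using this
      rw [(Ideal.eq_top_iff_one _).2 h1]
      exact Submodule.mem_top
    | succ N ihN =>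
      intro γ hN
      have hex : ∃ i, γ i ≠ 0 := by
        by_contra h
        push_neg at h
        simp [h] at hN
      obtain ⟨i, hi⟩ := hex
      set γ' := Function.update γ i (γ i - 1) with hγ'
      have hsplit : φ (∏ j, X j ^ γ j) =
          ((φ ∘ₗ LinearMap.mulLeft k (X i) - LinearMap.mulLeft k (X i) ∘ₗ φ)
            (∏ j, X j ^ γ' j)) + X i * φ (∏ j, X j ^ γ' j) := by
        rw [prod_pow_update_pred γ i hi]
        simp [LinearMap.sub_apply, LinearMap.comp_apply, LinearMap.mulLeft_apply]
        rfl
      rw [hsplit]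
      refine add_mem (lowerSpan_mono_pred γ i hi m (ih _ (hφ (X i)) γ'))
        (mul_X_mem_lowerSpan γ i hi (m + 1) _ (ihN γ' ?_))
      have h := sum_update_pred γ i hi
      rw [← hγ'] at h
      omega


lemma sum_update_succ' (δ : Fin d → ℕ) (i : Fin d) :
    (∑ j, Function.update δ i (δ i + 1) j) = (∑ j, δ j) + 1 := by
  rw [Finset.sum_update_of_mem (mem_univ i), Finset.sdiff_singleton_eq_erase]
  have := Finset.add_sum_erase univ δ (mem_univ i)
  omega

lemma pow_le_span_T (α : Fin d → ℕ) (j : ℕ) (hj : 0 < j) :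
    (Ideal.span ((fun i => (X i : MvPolynomial (Fin d) k) ^ α i) '' {i | α i ≠ 0})) ^ j ≤
    Ideal.span {p : MvPolynomial (Fin d) k | ∃ ω : Fin d → ℕ,
      (∀ i, ω i ≠ 0 → α i ≠ 0) ∧ (∑ i, ω i) = j ∧ p = ∏ i, X i ^ (α i * ω i)} := by
  induction j with
  | zero => exact absurd hj (lt_irrefl 0)
  | succ j ih =>
    rcases Nat.eq_zero_or_pos j with rfl | hj'
    · rw [pow_one, Ideal.span_le]
      rintro p ⟨i, hi, rfl⟩
      refine Ideal.subset_span ⟨fun j => if j = i then 1 else 0, ?_, ?_, ?_⟩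
      · intro j hj
        simp only [ne_eq, ite_eq_right_iff, not_forall] at hj
        obtain ⟨rfl, -⟩ := hj
        exact hi
      · simp
      · rw [Finset.prod_eq_single i (fun b _ hb => by simp [hb]) (by simp)]
        simp
    · rw [pow_succ]
      refine le_trans (Ideal.mul_mono_left (ih hj')) ?_
      rw [Ideal.span_mul_span']
      apply Ideal.span_mono
      rintro p ⟨t, ⟨ω, hsupp, hsum, rfl⟩, s, ⟨i, hi, rfl⟩, rfl⟩
      refine ⟨Function.update ω i (ω i + 1), ?_, ?_, ?_⟩
      · intro l hl
        by_cases hli : l = i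
        · subst hli; exact hi
        · rw [Function.update_of_ne hli] at hl
          exact hsupp l hl
      · rw [sum_update_succ', hsum]
      · symm
        rw [← Finset.mul_prod_erase univ
            (fun l => X l ^ (α l * Function.update ω i (ω i + 1) l)) (mem_univ i),
          ← Finset.mul_prod_erase univ (fun l => X l ^ (α l * ω l)) (mem_univ i)]
        have he : ∀ l ∈ univ.erase i,
            (X l : MvPolynomial (Fin d) k) ^ (α l * Function.update ω i (ω i + 1) l)
              = X l ^ (α l * ω l) := fun l hl => by
          rw [Function.update_of_ne (Finset.ne_of_mem_erase hl)]
        rw [Finset.prod_congr rfl he, Function.update_self, Nat.mul_succ, pow_add]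
        ring


lemma le_span_of_arith (α ω : Fin d → ℕ) (c n : ℕ) (hn : 0 < n)
    (hsupp : ∀ i, ω i ≠ 0 → α i ≠ 0) (hsum : (∑ i, ω i) = n)
    (hC : c ≤ ∑ i ∈ Finset.univ.filter fun i => ω i ≠ 0, (α i - 1) * (ω i - 1)) :
    lowerSpan (k := k) (fun i => α i * ω i) (n + c - 1) ≤
      Ideal.span ((fun i => (X i : MvPolynomial (Fin d) k) ^ α i) '' {i : Fin d | α i ≠ 0}) := by
  rw [lowerSpan, Ideal.span_le]
  rintro p ⟨δ, hδle, hδsum, rfl⟩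
  have hex : ∃ i, ω i ≠ 0 ∧ α i ≤ δ i := by
    by_contra hcon
    push_neg at hcon
    set F := Finset.univ.filter fun i => ω i ≠ 0 with hF
    have h1 : ∑ i ∈ F, α i * ω i = ∑ i, α i * ω i :=
      Finset.sum_filter_of_ne fun x _ h => by
        intro h0; exact h (by simp [h0])
    have h2 : ∑ i ∈ F, α i * ω i
        = ∑ i ∈ F, (ω i + ((α i - 1) * (ω i - 1) + (α i - 1))) := by
      refine Finset.sum_congr rfl fun i hi => ?_
      rw [hF, Finset.mem_filter] at hi
      obtain ⟨a, ha⟩ := Nat.exists_eq_succ_of_ne_zero (hsupp i hi.2)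
      obtain ⟨w, hw⟩ := Nat.exists_eq_succ_of_ne_zero hi.2
      rw [ha, hw]
      simp only [Nat.succ_sub_one, Nat.succ_eq_add_one]
      ring
    have h3 : ∑ i ∈ F, ω i = n := by
      rw [hF, Finset.sum_filter_ne_zero, hsum]
    have h4 : ∑ i ∈ F, δ i = ∑ i, δ i :=
      Finset.sum_filter_of_ne fun x _ h => by
        intro h0
        have := hδle x
        rw [h0, Nat.mul_zero, Nat.le_zero] at this
        exact h this
    have h5 : ∑ i ∈ F, δ i ≤ ∑ i ∈ F, (α i - 1) :=
      Finset.sum_le_sum fun i hi => by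
        rw [hF, Finset.mem_filter] at hi
        have := hcon i hi.2
        omega
    rw [Finset.sum_add_distrib, Finset.sum_add_distrib, h3] at h2
    omega
  obtain ⟨i, hωi, hαδ⟩ := hex
  have hgen : (X i : MvPolynomial (Fin d) k) ^ α i ∈
      Ideal.span ((fun i => (X i : MvPolynomial (Fin d) k) ^ α i) '' {i : Fin d | α i ≠ 0}) :=
    Ideal.subset_span ⟨i, hsupp i hωi, rfl⟩
  have heq : ∏ j, (X j : MvPolynomial (Fin d) k) ^ δ j
      = X i ^ α i * (X i ^ (δ i - α i) * ∏ j ∈ univ.erase i, X j ^ δ j) := by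
    rw [← Finset.mul_prod_erase univ (fun j => (X j : MvPolynomial (Fin d) k) ^ δ j)
      (mem_univ i), ← mul_assoc, ← pow_add]
    congr 2
    omega
  rw [heq]
  exact Ideal.mul_mem_right _ _ hgen

end Aux

/-- `I^n ⊆ I^⟨n+c⟩` where `c` is the minimum of `∑_{i ∈ supp ω}(α_i−1)(ω_i−1)` over
`ω` with `supp ω ⊆ supp α` and `|ω| = n`, for the pure-power ideal
`I = (x_i^{α_i} : i ∈ supp α)`. -/
theorem pow_le_diffPow_add {k : Type*} [Field k] [CharZero k] {d : ℕ}
    (α : Fin d → ℕ) (n : ℕ) (hn : 0 < n)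
    (I : Ideal (MvPolynomial (Fin d) k))
    (hI : I = Ideal.span
      ((fun i => (MvPolynomial.X i : MvPolynomial (Fin d) k) ^ α i) ''
        {i : Fin d | α i ≠ 0}))
    (c : ℕ)
    (hc : c = sInf {v : ℕ | ∃ ω : Fin d → ℕ, (∀ i, ω i ≠ 0 → α i ≠ 0) ∧
      (∑ i, ω i) = n ∧
      v = ∑ i ∈ Finset.univ.filter fun i => ω i ≠ 0, (α i - 1) * (ω i - 1)}) :
    I ^ n ≤ diffPow k (n + c) I := by
  subst hI
  refine le_trans (pow_le_span_T α n hn) ?_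
  rw [Ideal.span_le]
  rintro p ⟨ω, hsupp, hsum, rfl⟩
  intro φ hφ
  have hkey := diffOp_prod_pow_mem (k := k) (n + c - 1) φ hφ (fun i => α i * ω i)
  have hC : c ≤ ∑ i ∈ Finset.univ.filter fun i => ω i ≠ 0, (α i - 1) * (ω i - 1) := by
    rw [hc]; exact Nat.sInf_le ⟨ω, hsupp, hsum, rfl⟩
  refine le_span_of_arith α ω c n hn hsupp hsum hC hkey
end

section
/- Let R = k[x_1,...,x_d] with k a field of characteristic 0. There is no function p: N → N given by a polynomial such that I^⟨p(n)⟩ ⊆ I^n for all ideals I ⊆ R and all n ≥ 0. In fact, for any function p with p(n) ≥ 1 for all n, taking I = (x_1^{p(2)}) yields a failure of the containment I^⟨p(2)⟩ ⊆ I^2. -/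
lemma diffOp_pow_mem {A R : Type*} [CommRing A] [CommRing R] [Algebra A R] (x : R) :
    ∀ n (φ : R →ₗ[A] R), IsDiffOp A n φ → ∀ j r,
      φ (x ^ (n + j) * r) ∈ Ideal.span {x ^ j} := by
  intro n
  induction n with
  | zero =>
    rintro φ ⟨s, rfl⟩ j r
    exact Ideal.mem_span_singleton.2 ⟨s * r, by simp; ring⟩
  | succ n ih =>
    intro φ h j
    induction j with
    | zero => intro r; simp [Ideal.span_singleton_one]
    | succ j ihj =>
      intro r
      have h1 := ih _ (h x) (j + 1) r
      have h2 := ihj r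
      have key : φ (x ^ (n + 1 + (j + 1)) * r) =
          (φ ∘ₗ LinearMap.mulLeft A x - LinearMap.mulLeft A x ∘ₗ φ) (x ^ (n + (j + 1)) * r)
            + x * φ (x ^ (n + 1 + j) * r) := by
        simp only [LinearMap.sub_apply, LinearMap.comp_apply, LinearMap.mulLeft_apply]
        ring_nf
      rw [key]
      refine Ideal.add_mem _ h1 ?_
      obtain ⟨t, ht⟩ := Ideal.mem_span_singleton.1 h2
      exact Ideal.mem_span_singleton.2 ⟨t, by rw [ht]; ring⟩

lemma diffPow_congr {A R : Type*} [CommRing A] [CommRing R] [Algebra A R]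
    {n m : ℕ} (h : n - 1 = m - 1) (I : Ideal R) : diffPow A n I = diffPow A m I := by
  ext r
  exact ⟨fun hr φ hφ => hr φ (h ▸ hφ), fun hr φ hφ => hr φ (h.symm ▸ hφ)⟩

/-- There is no polynomial function `p` with `I^⟨p(n)⟩ ⊆ I^n` for all ideals `I` and
all `n`; in fact for any `p` with `p(n) ≥ 1`, taking `I = (x_1^{p(2)})` the
containment `I^⟨p(2)⟩ ⊆ I^2` fails. -/
theorem no_uniform_containment {k : Type*} [Field k] [CharZero k] {d : ℕ} (hd : 0 < d) :
    (¬ ∃ p : ℕ → ℕ, (∃ q : Polynomial ℕ, ∀ n, p n = q.eval n) ∧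
        ∀ (I : Ideal (MvPolynomial (Fin d) k)) (n : ℕ), diffPow k (p n) I ≤ I ^ n) ∧
      ∀ p : ℕ → ℕ, (∀ n, 1 ≤ p n) →
        ¬ (diffPow k (p 2)
            (Ideal.span {(MvPolynomial.X ⟨0, hd⟩ : MvPolynomial (Fin d) k) ^ p 2}) ≤
          (Ideal.span {(MvPolynomial.X ⟨0, hd⟩ : MvPolynomial (Fin d) k) ^ p 2}) ^ 2) := by
  set x : MvPolynomial (Fin d) k := MvPolynomial.X ⟨0, hd⟩ with hx
  have hxne : x ≠ 0 := MvPolynomial.X_ne_zero _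
  have hxu : ¬ IsUnit x := by
    intro hu
    have h0 : IsUnit (0 : k) := by
      simpa [hx, MvPolynomial.constantCoeff_X] using hu.map MvPolynomial.constantCoeff
    simp at h0
  have main : ∀ c : ℕ, 1 ≤ c →
      ¬ (diffPow k c (Ideal.span {x ^ c}) ≤ (Ideal.span {x ^ c}) ^ 2) := by
    intro c hc hle
    have hmem : x ^ (c - 1 + c) ∈ diffPow k c (Ideal.span {x ^ c}) := by
      intro φ hφ
      simpa using diffOp_pow_mem x (c - 1) φ hφ c 1
    have h2 := hle hmem
    rw [Ideal.span_singleton_pow, ← pow_mul, Ideal.mem_span_singleton] at h2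
    rw [pow_dvd_pow_iff hxne hxu] at h2
    omega
  constructor
  · rintro ⟨p, -, hp⟩
    have hc : (1:ℕ) ≤ max (p 2) 1 := le_max_right _ _
    refine main (max (p 2) 1) hc ?_
    have := hp (Ideal.span {x ^ max (p 2) 1}) 2
    rwa [diffPow_congr (n := p 2) (m := max (p 2) 1) (by omega)] at this
  · intro p hp1
    exact main (p 2) (hp1 2)
end

section
/- Let R be a commutative A-algebra that is a domain and I ⊆ R an ideal. Then √I is contained in the differential closure of I: for every r with r^k ∈ I for some k > 0, the element c = r^k is nonzero (if r ≠ 0) and satisfies c·r^n ∈ I^⟨n⟩_A for all n > 0. -/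
/-- The differential closure of an ideal `I` with respect to `A`: elements `r`
such that `c * r ^ n ∈ I^⟨n⟩_A` for some fixed nonzero `c` and all `n ≫ 0`. -/
def diffClosure (A : Type*) {R : Type*} [CommRing A] [CommRing R] [Algebra A R]
    (I : Ideal R) : Set R :=
  {r | ∃ c : R, c ≠ 0 ∧ ∃ N : ℕ, ∀ n : ℕ, N ≤ n → c * r ^ n ∈ diffPow A n I}

lemma diffOp_pow_dvd {A R : Type*} [CommRing A] [CommRing R] [Algebra A R] :
    ∀ t : ℕ, ∀ φ : R →ₗ[A] R, IsDiffOp A t φ → ∀ r : R, ∀ m : ℕ,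
      r ^ m ∣ φ (r ^ (m + t)) := by
  intro t
  induction t with
  | zero =>
    rintro φ ⟨c, rfl⟩ r m
    exact ⟨c, by simp [mul_comm]⟩
  | succ t ih =>
    intro φ hφ r m
    induction m with
    | zero => simp
    | succ m ihm =>
      have key : r ^ (m + 1 + (t + 1)) = r * r ^ (m + 1 + t) := by ring
      have hψ := ih _ (hφ r) r (m + 1)
      simp only [LinearMap.sub_apply, LinearMap.comp_apply, LinearMap.mulLeft_apply] at hψ
      -- hψ : r ^ (m+1) ∣ φ (r * r ^ (m+1+t)) - r * φ (r ^ (m+1+t))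
      have h2 : r ^ (m + 1) ∣ r * φ (r ^ (m + 1 + t)) := by
        have e : r ^ (m + 1 + t) = r ^ (m + (t + 1)) := by ring
        rw [e, pow_succ']
        exact mul_dvd_mul_left r ihm
      rw [key]
      have := dvd_add hψ h2
      simpa using this

/-- The radical of `I` is contained in the differential closure of `I`: if
`r^j ∈ I` with `j > 0`, then `c = r^j` is nonzero (for `r ≠ 0`) and satisfies
`c · r^n ∈ I^⟨n⟩_A` for all `n > 0`. -/
theorem radical_subset_diffClosure {A R : Type*} [CommRing A] [CommRing R]
    [IsDomain R] [Algebra A R] (I : Ideal R) :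
    (I.radical : Set R) ⊆ diffClosure A I ∧
      ∀ r : R, ∀ j : ℕ, 0 < j → r ^ j ∈ I →
        (r ≠ 0 → r ^ j ≠ 0) ∧ ∀ n : ℕ, 0 < n → r ^ j * r ^ n ∈ diffPow A n I := by
  have main : ∀ r : R, ∀ j : ℕ, 0 < j → r ^ j ∈ I →
      ∀ n : ℕ, 0 < n → r ^ j * r ^ n ∈ diffPow A n I := by
    intro r j hj hrj n hn φ hφ
    have hexp : j + n = (j + 1) + (n - 1) := by omega
    have hdvd : r ^ (j + 1) ∣ φ (r ^ (j + n)) := by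
      rw [hexp]; exact diffOp_pow_dvd (n - 1) φ hφ r (j + 1)
    obtain ⟨s, hs⟩ := hdvd
    rw [← pow_add, hs]
    exact I.mul_mem_right _ (by rw [pow_succ]; exact I.mul_mem_right r hrj)
  refine ⟨?_, fun r j hj hrj => ⟨fun hr => pow_ne_zero j hr, main r j hj hrj⟩⟩
  intro r hr
  obtain ⟨k, hk⟩ := hr
  by_cases hk0 : k = 0
  · -- 1 ∈ I, so I = ⊤
    subst hk0
    simp only [pow_zero] at hk
    refine ⟨1, one_ne_zero, 0, fun n _ φ hφ => ?_⟩
    exact (Ideal.eq_top_iff_one I).mpr hk ▸ trivial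
  · by_cases hr0 : r = 0
    · subst hr0
      refine ⟨1, one_ne_zero, 1, fun n hn φ hφ => ?_⟩
      rw [zero_pow (by omega), mul_zero, map_zero]
      exact I.zero_mem
    · exact ⟨r ^ k, pow_ne_zero k hr0, 1, fun n hn =>
        main r k (Nat.pos_of_ne_zero hk0) hk n hn⟩
end

section
/- Let R be a commutative A-algebra and {I_α}_{α∈S} a finite family of ideals. Then the differential closure of the intersection equals the intersection of the differential closures: (∩_α I_α)^diff_A = ∩_α (I_α)^diff_A. For arbitrary (possibly infinite) S, the containment (∩_α I_α)^diff_A ⊆ ∩_α (I_α)^diff_A holds. -/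
/-- Differential closure and intersections: always
`(∩ I_s)^diff ⊆ ∩ (I_s)^diff`, with equality for finite families. -/
theorem diffClosure_iInf {A R : Type*} [CommRing A] [CommRing R] [IsDomain R]
    [Algebra A R] {S : Type*} (I : S → Ideal R) :
    diffClosure A (⨅ s : S, I s) ⊆ ⋂ s : S, diffClosure A (I s) ∧
      (Finite S → diffClosure A (⨅ s : S, I s) = ⋂ s : S, diffClosure A (I s)) := by
  have hmem : ∀ (n : ℕ) (r : R), r ∈ diffPow A n (⨅ s : S, I s) ↔
      ∀ s, r ∈ diffPow A n (I s) := by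
    intro n r
    constructor
    · intro h s φ hφ
      exact Ideal.mem_iInf.1 (h φ hφ) s
    · intro h φ hφ
      exact Ideal.mem_iInf.2 fun s => h s φ hφ
  have hsub : diffClosure A (⨅ s : S, I s) ⊆ ⋂ s : S, diffClosure A (I s) := by
    rintro r ⟨c, hc, N, hN⟩
    refine Set.mem_iInter.2 fun s => ⟨c, hc, N, fun n hn => ?_⟩
    exact (hmem n _).1 (hN n hn) s
  refine ⟨hsub, fun hfin => ?_⟩
  refine le_antisymm hsub ?_
  have := Fintype.ofFinite S
  classical
  rintro r hr
  choose c hc N hN using fun s => Set.mem_iInter.1 hr s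
  refine ⟨∏ s, c s, ?_, Finset.univ.sup N, fun n hn => ?_⟩
  · exact Finset.prod_ne_zero_iff.2 fun s _ => hc s
  · refine (hmem n _).2 fun s => ?_
    have h1 : c s * r ^ n ∈ diffPow A n (I s) :=
      hN s n (le_trans (Finset.le_sup (Finset.mem_univ s)) hn)
    have : (∏ t ∈ Finset.univ.erase s, c t) * (c s * r ^ n) ∈ diffPow A n (I s) :=
      Ideal.mul_mem_left _ _ h1
    have hprod : (∏ t, c t) * r ^ n
        = (∏ t ∈ Finset.univ.erase s, c t) * (c s * r ^ n) := by
      rw [← mul_assoc, mul_comm (∏ t ∈ Finset.univ.erase s, c t) (c s),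
        Finset.mul_prod_erase _ _ (Finset.mem_univ s)]
    rw [hprod]
    exact this
end
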